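/- arXiv:2103.07697 — 3 statements merged into one kernel-verified Lean document; each statement's English description precedes it below -/
import Mathlib

section
/- (One-dimensional commutator integral identity) With p_m = Σ_{k=0}^m a_k ∂^k and p_m^* = multiplication by Σ_{k=0}^m \overline{a_k} z^k, for every complex polynomial u one has ∫_ℂ ([p_m, p_m^*]u)(z) \overline{u(z)} e^{−|z|²} dλ(z) = Σ_{ℓ=1}^{m} ℓ! ∫_ℂ | Σ_{k=ℓ}^{m} C(k,ℓ) a_k u^{(k−ℓ)}(z) |² e^{−|z|²} dλ(z). In particular this quantity is a nonnegative real number. -/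
open Polynomial MeasureTheory

/-- The operator p_m = Σ_{k=0}^m a_k ∂^k acting on polynomials. -/
noncomputable def Pop (a : ℕ → ℂ) (m : ℕ) (u : Polynomial ℂ) : Polynomial ℂ :=
  ∑ k ∈ Finset.range (m + 1), a k • derivative^[k] u

/-- The polynomial Σ_{k=0}^m conj(a_k) z^k, for the multiplication operator p_m^*. -/
noncomputable def Pstar (a : ℕ → ℂ) (m : ℕ) : Polynomial ℂ :=
  ∑ k ∈ Finset.range (m + 1), C ((starRingEnd ℂ) (a k)) * X ^ k

open Complex Real

lemma gauss_half : Integrable (fun z : ℂ => Real.exp (-(1/2) * ‖z‖^2)) := by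
  have := GaussianFourier.integrable_cexp_neg_mul_sq_norm_add (V := ℂ) (b := (1/2:ℂ)) (by norm_num) 0 0
  have h2 := this.norm
  refine h2.congr ?_
  filter_upwards with z
  simp [Complex.norm_exp, ← Complex.ofReal_pow]

lemma gauss_integrable (i j : ℕ) :
    Integrable (fun z : ℂ => z ^ i * (starRingEnd ℂ) z ^ j * (Real.exp (-‖z‖ ^ 2) : ℂ)) := by
  set n := i + j with hn
  have hbound : ∀ z : ℂ, ‖z ^ i * (starRingEnd ℂ) z ^ j * (Real.exp (-‖z‖ ^ 2) : ℂ)‖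
      ≤ (1 + 2^n * n.factorial) * Real.exp (-(1/2) * ‖z‖^2) := by
    intro z
    have h1 : ‖z ^ i * (starRingEnd ℂ) z ^ j * (Real.exp (-‖z‖ ^ 2) : ℂ)‖
        = ‖z‖ ^ n * Real.exp (-‖z‖ ^ 2) := by
      rw [norm_mul, norm_mul, norm_pow, norm_pow, RCLike.norm_conj, Complex.norm_real, Real.norm_eq_abs,
        Real.abs_exp, ← pow_add]
    rw [h1]
    set r := ‖z‖ with hr
    have hr0 : 0 ≤ r := norm_nonneg z
    have key : r ^ n ≤ 1 + r ^ (2 * n) := by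
      rcases le_total r 1 with h | h
      · have : r ^ n ≤ 1 := pow_le_one₀ hr0 h
        nlinarith [pow_nonneg hr0 (2*n)]
      · have : r ^ n ≤ r ^ (2 * n) := pow_le_pow_right₀ h (by omega)
        linarith
    have hfac : r ^ (2 * n) * Real.exp (-(1/2) * r ^ 2) ≤ 2 ^ n * n.factorial := by
      have hx : (0:ℝ) ≤ r^2 / 2 := by positivity
      have hexp : (r^2/2) ^ n / n.factorial ≤ Real.exp (r^2/2) := by
        calc (r^2/2) ^ n / n.factorial ≤ ∑ k ∈ Finset.range (n+1), (r^2/2) ^ k / k.factorial := by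
              exact Finset.single_le_sum (f := fun k => (r^2/2)^k / k.factorial)
                (fun k _ => by positivity) (Finset.self_mem_range_succ n)
          _ ≤ Real.exp (r^2/2) := Real.sum_le_exp_of_nonneg hx _
      have h2 : r ^ (2*n) = (r^2/2)^n * 2^n := by
        rw [div_pow, pow_mul]; field_simp
      rw [h2]
      have hle : (r^2/2)^n ≤ n.factorial * Real.exp (r^2/2) := by
        rw [div_le_iff₀ (by positivity : (0:ℝ) < (n.factorial:ℝ))] at hexp
        linarith [hexp]
      calc (r^2/2)^n * 2^n * Real.exp (-(1/2) * r^2)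
          ≤ (n.factorial * Real.exp (r^2/2)) * 2^n * Real.exp (-(1/2)*r^2) := by
            apply mul_le_mul_of_nonneg_right (mul_le_mul_of_nonneg_right hle (by positivity)) (le_of_lt (Real.exp_pos _))
        _ = 2^n * n.factorial * Real.exp (r^2/2 + -(1/2*r^2)) := by rw [Real.exp_add]; ring
        _ = 2^n * n.factorial := by rw [show r^2/2 + -(1/2*r^2) = 0 by ring, Real.exp_zero, mul_one]
    have heq : Real.exp (-r^2) = Real.exp (-(1/2)*r^2) * Real.exp (-(1/2)*r^2) := by
      rw [← Real.exp_add]; ring_nf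
    have hle1 : Real.exp (-r^2) ≤ Real.exp (-(1/2)*r^2) :=
      Real.exp_le_exp.mpr (by nlinarith)
    have hE : 0 < Real.exp (-(1/2)*r^2) := Real.exp_pos _
    have hrn : (0:ℝ) ≤ r ^ (2*n) := pow_nonneg hr0 _
    nlinarith [mul_le_mul_of_nonneg_right key (le_of_lt (Real.exp_pos (-r^2)))]
  refine Integrable.mono' (gauss_half.const_mul (1 + 2^n * n.factorial)) ?_ ?_
  · apply Continuous.aestronglyMeasurable
    exact ((continuous_pow i).mul (Complex.continuous_conj.pow j)).mul
      (Complex.continuous_ofReal.comp (Real.continuous_exp.comp (continuous_norm.pow 2).neg))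
  · filter_upwards with z using hbound z


lemma gauss_moment (i j : ℕ) :
    ∫ z : ℂ, z ^ i * (starRingEnd ℂ) z ^ j * (Real.exp (-‖z‖ ^ 2) : ℂ)
      = if i = j then (Real.pi * i.factorial : ℂ) else 0 := by
  rw [← Complex.integral_comp_polarCoord_symm]
  rw [polarCoord_target]
  rw [setIntegral_congr_fun (measurableSet_Ioi.prod measurableSet_Ioo)
    (g := fun p : ℝ × ℝ => ((p.1 ^ (i+j+1) * Real.exp (-p.1^2) : ℝ) : ℂ) *
      Complex.exp ((((i:ℤ) - (j:ℤ) : ℤ) : ℂ) * Complex.I * p.2)) ?_]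
  · rw [MeasureTheory.Measure.volume_eq_prod,
      MeasureTheory.setIntegral_prod_mul (f := fun r : ℝ => ((r ^ (i+j+1) * Real.exp (-r^2) : ℝ) : ℂ))
        (g := fun θ : ℝ => Complex.exp ((((i:ℤ) - (j:ℤ) : ℤ) : ℂ) * Complex.I * θ))]
    have hang : (∫ θ in Set.Ioo (-π) π,
        Complex.exp ((((i:ℤ) - (j:ℤ) : ℤ) : ℂ) * Complex.I * θ))
        = if i = j then ((2*π : ℝ):ℂ) else 0 := by
      by_cases h : i = j
      · subst h
        simp only [sub_self, Int.cast_zero, zero_mul, Complex.exp_zero, if_pos rfl]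
        rw [setIntegral_const]
        simp [Real.volume_Ioo, two_mul, ENNReal.toReal_ofReal (by positivity : (0:ℝ) ≤ π + π), max_eq_left (by positivity : (0:ℝ) ≤ π + π),
          Complex.real_smul]
      · rw [if_neg h]
        have hc : (((i:ℤ) - (j:ℤ) : ℤ) : ℂ) * Complex.I ≠ 0 := by
          apply mul_ne_zero _ Complex.I_ne_zero
          rw [Int.cast_ne_zero]
          omega
        rw [← integral_Ioc_eq_integral_Ioo,
          ← intervalIntegral.integral_of_le (by linarith [Real.pi_pos] : -π ≤ π)]
        rw [integral_exp_mul_complex hc]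
        have key : (((i:ℤ) - (j:ℤ) : ℤ) : ℂ) * Complex.I * π
            = (((i:ℤ) - (j:ℤ) : ℤ) : ℂ) * Complex.I * (-π : ℝ) + ((i:ℤ) - (j:ℤ) : ℤ) * (2*π*Complex.I) := by
          push_cast; ring
        rw [key, Complex.exp_add, Complex.exp_int_mul_two_pi_mul_I, mul_one, sub_self, zero_div]
    rw [hang]
    by_cases h : i = j
    · subst h
      rw [if_pos rfl, if_pos rfl]
      have hrad : (∫ r in Set.Ioi (0:ℝ), ((r ^ (i+i+1) * Real.exp (-r^2) : ℝ) : ℂ))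
          = ((i.factorial / 2 : ℝ) : ℂ) := by
        rw [show (∫ r in Set.Ioi (0:ℝ), ((r ^ (i+i+1) * Real.exp (-r^2) : ℝ) : ℂ))
            = ((∫ r in Set.Ioi (0:ℝ), r ^ (i+i+1) * Real.exp (-r^2) : ℝ) : ℂ) from integral_ofReal]
        norm_cast
        have : ∀ r ∈ Set.Ioi (0:ℝ), r ^ (i+i+1) * Real.exp (-r^2)
            = r ^ ((i+i+1 : ℕ) : ℝ) * Real.exp (-r ^ (2:ℝ)) := by
          intro r hr
          rw [Real.rpow_natCast, Real.rpow_two]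
        rw [setIntegral_congr_fun measurableSet_Ioi this,
          _root_.integral_rpow_mul_exp_neg_rpow (by norm_num) (by push_cast; linarith [Nat.cast_nonneg (α := ℝ) i])]
        rw [show (((i+i+1 : ℕ) : ℝ) + 1)/2 = (i : ℝ) + 1 by push_cast; ring,
          Real.Gamma_nat_eq_factorial]
        ring
      rw [hrad]
      push_cast
      ring
    · rw [if_neg h, if_neg h, mul_zero]
  · intro p hp
    obtain ⟨hp1, hp2⟩ := hp
    have hp1' : (0:ℝ) < p.1 := hp1
    have hz : Complex.polarCoord.symm p = (p.1 : ℂ) * Complex.exp ((p.2 : ℂ) * Complex.I) := by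
      rw [Complex.polarCoord_symm_apply, Complex.exp_mul_I]
      norm_cast
    have hnorm : ‖Complex.polarCoord.symm p‖ = p.1 := by
      rw [Complex.norm_polarCoord_symm, abs_of_pos hp1']
    have hconj : (starRingEnd ℂ) (Complex.polarCoord.symm p)
        = (p.1 : ℂ) * Complex.exp (-(p.2 : ℂ) * Complex.I) := by
      rw [hz, map_mul, Complex.conj_ofReal, ← Complex.exp_conj]
      congr 2
      simp [Complex.conj_I, Complex.conj_ofReal]
    have hexp : Complex.exp ((((i:ℤ) - (j:ℤ) : ℤ) : ℂ) * Complex.I * p.2)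
        = Complex.exp ((i:ℂ) * ((p.2:ℂ) * Complex.I)) * Complex.exp ((j:ℂ) * (-(p.2:ℂ) * Complex.I)) := by
      rw [← Complex.exp_add]
      congr 1
      push_cast
      ring
    simp only
    rw [hconj, hnorm, hz, mul_pow, mul_pow, ← Complex.exp_nat_mul, ← Complex.exp_nat_mul,
      Complex.real_smul, hexp]
    push_cast
    ring


noncomputable def FcN (n : ℕ) (P Q : Polynomial ℂ) : ℂ :=
  ∑ k ∈ Finset.range n, P.coeff k * (starRingEnd ℂ) (Q.coeff k) * (Nat.factorial k : ℂ)

noncomputable def Fc (P Q : Polynomial ℂ) : ℂ :=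
  (Real.pi : ℂ) * FcN (max P.natDegree Q.natDegree + 1) P Q

lemma FcN_stable {P : Polynomial ℂ} (Q : Polynomial ℂ) {n n' : ℕ} (h : P.natDegree < n)
    (h' : n ≤ n') : FcN n' P Q = FcN n P Q := by
  unfold FcN
  rw [← Finset.sum_subset (Finset.range_subset_range.mpr h')]
  intro k hk hk'
  rw [Polynomial.coeff_eq_zero_of_natDegree_lt, zero_mul, zero_mul]
  simp only [Finset.mem_range, not_lt] at hk'
  omega

lemma Fc_eq {P : Polynomial ℂ} (Q : Polynomial ℂ) {n : ℕ} (h : P.natDegree < n) :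
    Fc P Q = (Real.pi : ℂ) * FcN n P Q := by
  unfold Fc
  have e1 : FcN (max (max P.natDegree Q.natDegree + 1) n) P Q
      = FcN (max P.natDegree Q.natDegree + 1) P Q :=
    FcN_stable Q (Nat.lt_succ_of_le (le_max_left _ _)) (le_max_left _ _)
  have e2 : FcN (max (max P.natDegree Q.natDegree + 1) n) P Q = FcN n P Q :=
    FcN_stable Q h (le_max_right _ _)
  rw [← e1, e2]

lemma Fc_zero_left (Q : Polynomial ℂ) : Fc 0 Q = 0 := by
  rw [Fc_eq Q (n := 1) (by simp)]; simp [FcN]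

lemma Fc_zero_right (P : Polynomial ℂ) : Fc P 0 = 0 := by
  rw [show Fc P 0 = (Real.pi:ℂ) * FcN (P.natDegree + 1) P 0 from Fc_eq 0 (Nat.lt_succ_self _)]
  simp [FcN]

lemma Fc_add_left (P P' Q : Polynomial ℂ) : Fc (P + P') Q = Fc P Q + Fc P' Q := by
  set n := max (P + P').natDegree (max P.natDegree P'.natDegree) + 1 with hn
  have h1 : (P + P').natDegree < n := Nat.lt_succ_of_le (le_max_left _ _)
  have h2 : P.natDegree < n :=
    Nat.lt_succ_of_le ((le_max_left _ _).trans (le_max_right _ _))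
  have h3 : P'.natDegree < n :=
    Nat.lt_succ_of_le ((le_max_right _ _).trans (le_max_right _ _))
  rw [Fc_eq Q h1, Fc_eq Q h2, Fc_eq Q h3]
  unfold FcN
  rw [← mul_add, ← Finset.sum_add_distrib]
  congr 1
  refine Finset.sum_congr rfl fun k _ => ?_
  rw [Polynomial.coeff_add]
  ring

lemma Fc_smul_left (c : ℂ) (P Q : Polynomial ℂ) : Fc (c • P) Q = c * Fc P Q := by
  have h1 : (c • P).natDegree < P.natDegree + 1 :=
    Nat.lt_succ_of_le (Polynomial.natDegree_smul_le c P)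
  rw [Fc_eq Q h1, Fc_eq Q (Nat.lt_succ_self P.natDegree)]
  unfold FcN
  simp only [Finset.mul_sum]
  refine Finset.sum_congr rfl fun k _ => ?_
  rw [Polynomial.coeff_smul, smul_eq_mul]
  ring

lemma Fc_add_right (P Q Q' : Polynomial ℂ) : Fc P (Q + Q') = Fc P Q + Fc P Q' := by
  have h := Nat.lt_succ_self P.natDegree
  rw [Fc_eq (Q + Q') h, Fc_eq Q h, Fc_eq Q' h]
  unfold FcN
  rw [← mul_add, ← Finset.sum_add_distrib]
  congr 1
  refine Finset.sum_congr rfl fun k _ => ?_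
  rw [Polynomial.coeff_add, map_add]
  ring

lemma Fc_smul_right (c : ℂ) (P Q : Polynomial ℂ) :
    Fc P (c • Q) = (starRingEnd ℂ) c * Fc P Q := by
  have h := Nat.lt_succ_self P.natDegree
  rw [Fc_eq (c • Q) h, Fc_eq Q h]
  unfold FcN
  simp only [Finset.mul_sum]
  refine Finset.sum_congr rfl fun k _ => ?_
  rw [Polynomial.coeff_smul, smul_eq_mul, map_mul]
  ring

lemma Fc_sum_left {ι : Type*} (s : Finset ι) (f : ι → Polynomial ℂ) (Q : Polynomial ℂ) :
    Fc (∑ i ∈ s, f i) Q = ∑ i ∈ s, Fc (f i) Q := by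
  induction s using Finset.cons_induction with
  | empty => simpa using Fc_zero_left Q
  | cons a s ha ih => rw [Finset.sum_cons, Finset.sum_cons, Fc_add_left, ih]

lemma Fc_sum_right {ι : Type*} (s : Finset ι) (P : Polynomial ℂ) (f : ι → Polynomial ℂ) :
    Fc P (∑ i ∈ s, f i) = ∑ i ∈ s, Fc P (f i) := by
  induction s using Finset.cons_induction with
  | empty => simpa using Fc_zero_right P
  | cons a s ha ih => rw [Finset.sum_cons, Finset.sum_cons, Fc_add_right, ih]

lemma Fc_sub_left (P P' Q : Polynomial ℂ) : Fc (P - P') Q = Fc P Q - Fc P' Q := by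
  rw [eq_sub_iff_add_eq, ← Fc_add_left, sub_add_cancel]

lemma Fc_X_mul (f g : Polynomial ℂ) : Fc (X * f) g = Fc f (derivative g) := by
  have h1 : (X * f).natDegree < f.natDegree + 1 + 1 := by
    have := Polynomial.natDegree_mul_le (p := (X : Polynomial ℂ)) (q := f)
    have hX : (X : Polynomial ℂ).natDegree = 1 := Polynomial.natDegree_X
    omega
  rw [Fc_eq g h1, Fc_eq (derivative g) (Nat.lt_succ_self f.natDegree)]
  unfold FcN
  rw [Finset.sum_range_succ']
  simp only [Polynomial.coeff_X_mul, Polynomial.coeff_X_mul_zero, zero_mul, add_zero]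
  congr 1
  refine Finset.sum_congr rfl fun k _ => ?_
  rw [Polynomial.coeff_derivative, map_mul, Nat.factorial_succ]
  have : (starRingEnd ℂ) ((k:ℂ) + 1) = (k:ℂ) + 1 := by
    rw [map_add, Complex.conj_natCast, map_one]
  rw [this]
  push_cast
  ring

lemma Fc_X_pow_mul (n : ℕ) (f g : Polynomial ℂ) :
    Fc (X ^ n * f) g = Fc f (derivative^[n] g) := by
  induction n generalizing g with
  | zero => simp
  | succ n ih =>
    rw [show X ^ (n+1) * f = X * (X ^ n * f) by ring, Fc_X_mul, ih,
      ← Function.iterate_succ_apply]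


lemma B_eq (P Q : Polynomial ℂ) :
    (∫ z : ℂ, P.eval z * (starRingEnd ℂ) (Q.eval z) * (Real.exp (-‖z‖ ^ 2) : ℂ)) = Fc P Q := by
  set n := max P.natDegree Q.natDegree + 1 with hn
  have hP : P.natDegree < n := Nat.lt_succ_of_le (le_max_left _ _)
  have hQ : Q.natDegree < n := Nat.lt_succ_of_le (le_max_right _ _)
  have hev : ∀ z : ℂ, P.eval z * (starRingEnd ℂ) (Q.eval z) * (Real.exp (-‖z‖ ^ 2) : ℂ)
      = ∑ i ∈ Finset.range n, ∑ j ∈ Finset.range n,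
        P.coeff i * (starRingEnd ℂ) (Q.coeff j) *
          (z ^ i * (starRingEnd ℂ) z ^ j * (Real.exp (-‖z‖ ^ 2) : ℂ)) := by
    intro z
    rw [Polynomial.eval_eq_sum_range' hP, Polynomial.eval_eq_sum_range' hQ, map_sum,
      Finset.sum_mul_sum, Finset.sum_mul]
    refine Finset.sum_congr rfl fun i _ => ?_
    rw [Finset.sum_mul]
    refine Finset.sum_congr rfl fun j _ => ?_
    rw [map_mul, map_pow]
    ring
  simp_rw [hev]
  rw [integral_finset_sum _ (fun i _ => integrable_finset_sum _
    (fun j _ => (gauss_integrable i j).const_mul _))]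
  have step : ∀ i ∈ Finset.range n,
      (∫ z : ℂ, ∑ j ∈ Finset.range n, P.coeff i * (starRingEnd ℂ) (Q.coeff j) *
        (z ^ i * (starRingEnd ℂ) z ^ j * (Real.exp (-‖z‖ ^ 2) : ℂ)))
      = P.coeff i * (starRingEnd ℂ) (Q.coeff i) * ((Real.pi : ℂ) * i.factorial) := by
    intro i hi
    rw [integral_finset_sum _ (fun j _ => (gauss_integrable i j).const_mul _)]
    have : ∀ j ∈ Finset.range n,
        (∫ z : ℂ, P.coeff i * (starRingEnd ℂ) (Q.coeff j) *
          (z ^ i * (starRingEnd ℂ) z ^ j * (Real.exp (-‖z‖ ^ 2) : ℂ)))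
        = if i = j then P.coeff i * (starRingEnd ℂ) (Q.coeff j) *
            ((Real.pi : ℂ) * i.factorial) else 0 := by
      intro j _
      rw [MeasureTheory.integral_const_mul, gauss_moment]
      split_ifs with h
      · ring
      · rw [mul_zero]
    rw [Finset.sum_congr rfl this, Finset.sum_ite_eq, if_pos hi]
  rw [Finset.sum_congr rfl step, Fc_eq Q hP]
  unfold FcN
  rw [Finset.mul_sum]
  exact Finset.sum_congr rfl fun i _ => by ring


lemma comm_expand (m k j : ℕ) (hk : k ≤ m) (u : Polynomial ℂ) :
    Fc (derivative^[k] (X ^ j * u) - X ^ j * derivative^[k] u) u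
      = ∑ ℓ ∈ Finset.Icc 1 m, ((Nat.choose k ℓ : ℂ) * (Nat.descFactorial j ℓ : ℂ)) *
          Fc (derivative^[k - ℓ] u) (derivative^[j - ℓ] u) := by
  have hmul : derivative^[k] (X ^ j * u) = ∑ ℓ ∈ Finset.range (k+1),
      (((Nat.choose k ℓ * Nat.descFactorial j ℓ : ℕ)) : ℂ) • (X ^ (j - ℓ) * derivative^[k-ℓ] u) := by
    rw [mul_comm, Polynomial.iterate_derivative_mul]
    refine Finset.sum_congr rfl fun ℓ hℓ => ?_
    rw [Polynomial.iterate_derivative_X_pow_eq_smul, ← Nat.cast_smul_eq_nsmul ℂ (k.choose ℓ),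
      mul_smul_comm, smul_smul, mul_comm (derivative^[k-ℓ] u) _]
    push_cast
    ring_nf
  rw [hmul, Fc_sub_left, Fc_sum_left]
  simp_rw [Fc_smul_left, Fc_X_pow_mul]
  have h0 : (0:ℕ) ∈ Finset.range (k+1) := by simp
  rw [← Finset.add_sum_erase _ _ h0]
  simp only [Nat.choose_zero_right, Nat.descFactorial_zero, mul_one, Nat.cast_one, one_mul,
    Nat.sub_zero, Fc_X_pow_mul]
  rw [add_sub_cancel_left]
  have hset : (Finset.range (k+1)).erase 0 = Finset.Icc 1 k := by
    ext x
    simp only [Finset.mem_erase, Finset.mem_range, Finset.mem_Icc]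
    omega
  rw [hset]
  rw [Finset.sum_subset (Finset.Icc_subset_Icc_right hk)]
  · exact Finset.sum_congr rfl fun ℓ _ => by push_cast; ring
  · intro ℓ _ hℓ'
    simp only [Finset.mem_Icc, not_and, not_le] at hℓ'
    have : Nat.choose k ℓ = 0 := by
      apply Nat.choose_eq_zero_of_lt
      rcases Finset.mem_Icc.mp ‹ℓ ∈ Finset.Icc 1 m› with ⟨h1, h2⟩
      exact hℓ' h1
    rw [this]
    push_cast
    ring


lemma P0_expand (a : ℕ → ℂ) (m : ℕ) (u : Polynomial ℂ) :
    Pop a m (Pstar a m * u) - Pstar a m * Pop a m u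
      = ∑ k ∈ Finset.range (m+1), ∑ j ∈ Finset.range (m+1),
          (a k * (starRingEnd ℂ) (a j)) •
            (derivative^[k] (X ^ j * u) - X ^ j * derivative^[k] u) := by
  have h1 : Pop a m (Pstar a m * u)
      = ∑ k ∈ Finset.range (m+1), ∑ j ∈ Finset.range (m+1),
          (a k * (starRingEnd ℂ) (a j)) • derivative^[k] (X ^ j * u) := by
    unfold Pop Pstar
    rw [Finset.sum_mul]
    refine Finset.sum_congr rfl fun k _ => ?_
    rw [Polynomial.iterate_derivative_sum, Finset.smul_sum]
    refine Finset.sum_congr rfl fun j _ => ?_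
    rw [mul_assoc, ← Polynomial.smul_eq_C_mul, Polynomial.iterate_derivative_smul,
      smul_smul]
  have h2 : Pstar a m * Pop a m u
      = ∑ k ∈ Finset.range (m+1), ∑ j ∈ Finset.range (m+1),
          (a k * (starRingEnd ℂ) (a j)) • (X ^ j * derivative^[k] u) := by
    unfold Pop Pstar
    rw [Finset.sum_mul]
    simp_rw [Finset.mul_sum]
    rw [Finset.sum_comm]
    refine Finset.sum_congr rfl fun k _ => ?_
    refine Finset.sum_congr rfl fun j _ => ?_
    rw [mul_smul_comm, mul_assoc, ← Polynomial.smul_eq_C_mul, smul_smul]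
  rw [h1, h2, ← Finset.sum_sub_distrib]
  refine Finset.sum_congr rfl fun k _ => ?_
  rw [← Finset.sum_sub_distrib]
  exact Finset.sum_congr rfl fun j _ => (smul_sub _ _ _).symm


-- the key algebraic identity, assuming comm_expand applied already
lemma key_identity (m : ℕ) (a : ℕ → ℂ) (u : Polynomial ℂ) :
    (∑ k ∈ Finset.range (m+1), ∑ j ∈ Finset.range (m+1),
      (a k * (starRingEnd ℂ) (a j)) *
        ∑ ℓ ∈ Finset.Icc 1 m, ((Nat.choose k ℓ : ℂ) * (Nat.descFactorial j ℓ : ℂ)) *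
          Fc (derivative^[k - ℓ] u) (derivative^[j - ℓ] u))
    = ∑ ℓ ∈ Finset.Icc 1 m, (Nat.factorial ℓ : ℂ) *
        Fc (∑ k ∈ Finset.Icc ℓ m, ((Nat.choose k ℓ : ℂ) * a k) • derivative^[k - ℓ] u)
           (∑ k ∈ Finset.Icc ℓ m, ((Nat.choose k ℓ : ℂ) * a k) • derivative^[k - ℓ] u) := by
  have hRHS : ∀ ℓ ∈ Finset.Icc 1 m,
      Fc (∑ k ∈ Finset.Icc ℓ m, ((Nat.choose k ℓ : ℂ) * a k) • derivative^[k - ℓ] u)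
         (∑ k ∈ Finset.Icc ℓ m, ((Nat.choose k ℓ : ℂ) * a k) • derivative^[k - ℓ] u)
      = ∑ k ∈ Finset.range (m+1), ∑ j ∈ Finset.range (m+1),
          ((Nat.choose k ℓ : ℂ) * (Nat.choose j ℓ : ℂ)) * (a k * (starRingEnd ℂ) (a j)) *
            Fc (derivative^[k - ℓ] u) (derivative^[j - ℓ] u) := by
    intro ℓ hℓ
    have hsub : Finset.Icc ℓ m ⊆ Finset.range (m+1) := fun x hx =>
      Finset.mem_range.mpr (by have := (Finset.mem_Icc.mp hx).2; omega)
    rw [Fc_sum_left]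
    simp_rw [Fc_smul_left, Fc_sum_right, Fc_smul_right, map_mul, Complex.conj_natCast]
    have hin : ∀ k, (∑ j ∈ Finset.Icc ℓ m, (Nat.choose j ℓ : ℂ) * (starRingEnd ℂ) (a j) *
          Fc (derivative^[k - ℓ] u) (derivative^[j - ℓ] u))
        = ∑ j ∈ Finset.range (m+1), (Nat.choose j ℓ : ℂ) * (starRingEnd ℂ) (a j) *
          Fc (derivative^[k - ℓ] u) (derivative^[j - ℓ] u) := by
      intro k
      refine Finset.sum_subset hsub fun j hj hj' => ?_
      have : Nat.choose j ℓ = 0 := Nat.choose_eq_zero_of_lt (by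
        simp only [Finset.mem_Icc, not_and, not_le] at hj'
        simp only [Finset.mem_range] at hj
        omega)
      rw [this, Nat.cast_zero, zero_mul, zero_mul]
    calc (∑ k ∈ Finset.Icc ℓ m, (Nat.choose k ℓ : ℂ) * a k *
            ∑ j ∈ Finset.Icc ℓ m, (Nat.choose j ℓ : ℂ) * (starRingEnd ℂ) (a j) *
              Fc (derivative^[k - ℓ] u) (derivative^[j - ℓ] u))
        = ∑ k ∈ Finset.range (m+1), (Nat.choose k ℓ : ℂ) * a k *
            ∑ j ∈ Finset.range (m+1), (Nat.choose j ℓ : ℂ) * (starRingEnd ℂ) (a j) *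
              Fc (derivative^[k - ℓ] u) (derivative^[j - ℓ] u) := by
          rw [← Finset.sum_subset hsub (fun k hk hk' => ?_)]
          · exact Finset.sum_congr rfl fun k _ => by rw [hin k]
          · have : Nat.choose k ℓ = 0 := Nat.choose_eq_zero_of_lt (by
              simp only [Finset.mem_Icc, not_and, not_le] at hk'
              simp only [Finset.mem_range] at hk
              omega)
            rw [this, Nat.cast_zero, zero_mul, zero_mul]
      _ = _ := by
          refine Finset.sum_congr rfl fun k _ => ?_
          rw [Finset.mul_sum]
          refine Finset.sum_congr rfl fun j _ => ?_
          ring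
  calc (∑ k ∈ Finset.range (m+1), ∑ j ∈ Finset.range (m+1),
        (a k * (starRingEnd ℂ) (a j)) *
          ∑ ℓ ∈ Finset.Icc 1 m, ((Nat.choose k ℓ : ℂ) * (Nat.descFactorial j ℓ : ℂ)) *
            Fc (derivative^[k - ℓ] u) (derivative^[j - ℓ] u))
      = ∑ k ∈ Finset.range (m+1), ∑ j ∈ Finset.range (m+1), ∑ ℓ ∈ Finset.Icc 1 m,
          (a k * (starRingEnd ℂ) (a j)) * (((Nat.choose k ℓ : ℂ) * (Nat.descFactorial j ℓ : ℂ)) *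
            Fc (derivative^[k - ℓ] u) (derivative^[j - ℓ] u)) := by
        exact Finset.sum_congr rfl fun k _ => Finset.sum_congr rfl fun j _ => Finset.mul_sum ..
    _ = ∑ k ∈ Finset.range (m+1), ∑ ℓ ∈ Finset.Icc 1 m, ∑ j ∈ Finset.range (m+1),
          (a k * (starRingEnd ℂ) (a j)) * (((Nat.choose k ℓ : ℂ) * (Nat.descFactorial j ℓ : ℂ)) *
            Fc (derivative^[k - ℓ] u) (derivative^[j - ℓ] u)) :=
        Finset.sum_congr rfl fun k _ => Finset.sum_comm
    _ = ∑ ℓ ∈ Finset.Icc 1 m, ∑ k ∈ Finset.range (m+1), ∑ j ∈ Finset.range (m+1),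
          (a k * (starRingEnd ℂ) (a j)) * (((Nat.choose k ℓ : ℂ) * (Nat.descFactorial j ℓ : ℂ)) *
            Fc (derivative^[k - ℓ] u) (derivative^[j - ℓ] u)) := Finset.sum_comm
    _ = _ := by
        refine Finset.sum_congr rfl fun ℓ hℓ => ?_
        rw [hRHS ℓ hℓ, Finset.mul_sum]
        refine Finset.sum_congr rfl fun k _ => ?_
        rw [Finset.mul_sum]
        refine Finset.sum_congr rfl fun j _ => ?_
        rw [Nat.descFactorial_eq_factorial_mul_choose]
        push_cast
        ring



/-- One-dimensional commutator integral identity: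
∫ ([p_m,p_m^*]u) conj(u) e^{-|z|²} = Σ_{ℓ=1}^m ℓ! ∫ |Σ_{k=ℓ}^m C(k,ℓ) a_k u^{(k-ℓ)}|² e^{-|z|²}. -/
theorem stmt8 (m : ℕ) (a : ℕ → ℂ) (u : Polynomial ℂ) :
    (∫ z : ℂ, (Pop a m (Pstar a m * u) - Pstar a m * Pop a m u).eval z *
        (starRingEnd ℂ) (u.eval z) * (Real.exp (-‖z‖ ^ 2) : ℂ)) =
      ∑ ℓ ∈ Finset.Icc 1 m,
        (Nat.factorial ℓ : ℂ) *
          ∫ z : ℂ,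
            ((Complex.normSq
              ((∑ k ∈ Finset.Icc ℓ m,
                ((Nat.choose k ℓ : ℂ) * a k) • derivative^[k - ℓ] u).eval z) : ℝ) : ℂ) *
            (Real.exp (-‖z‖ ^ 2) : ℂ) := by
  rw [B_eq (Pop a m (Pstar a m * u) - Pstar a m * Pop a m u) u]
  have hRw : ∀ ℓ ∈ Finset.Icc 1 m,
      (Nat.factorial ℓ : ℂ) *
        (∫ z : ℂ, ((Complex.normSq
            ((∑ k ∈ Finset.Icc ℓ m,
              ((Nat.choose k ℓ : ℂ) * a k) • derivative^[k - ℓ] u).eval z) : ℝ) : ℂ) *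
          (Real.exp (-‖z‖ ^ 2) : ℂ))
      = (Nat.factorial ℓ : ℂ) *
          Fc (∑ k ∈ Finset.Icc ℓ m, ((Nat.choose k ℓ : ℂ) * a k) • derivative^[k - ℓ] u)
             (∑ k ∈ Finset.Icc ℓ m, ((Nat.choose k ℓ : ℂ) * a k) • derivative^[k - ℓ] u) := by
    intro ℓ _
    congr 1
    rw [← B_eq]
    congr 1
    funext z
    rw [Complex.mul_conj]
  rw [P0_expand, Fc_sum_left]
  simp_rw [Fc_sum_left, Fc_smul_left]
  rw [Finset.sum_congr rfl (fun k hk => Finset.sum_congr rfl (fun j _ => by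
    rw [comm_expand m k j (Nat.lt_succ_iff.mp (Finset.mem_range.mp hk)) u]))]
  rw [Finset.sum_congr rfl hRw]
  exact key_identity m a u
end

section
/- (Weyl-algebra form of the one-dimensional commutator) Let p(w) = Σ_{k=0}^m a_k w^k be a complex polynomial, P = p(∂) the corresponding constant-coefficient differential operator, and P^* multiplication by \overline{p}(z) := Σ \overline{a_k} z^k. Then for every complex polynomial u, ∫_ℂ ([P, P^*]u) \overline{u} e^{−|z|²} dλ = Σ_{ℓ=1}^{m} (1/ℓ!) ∫_ℂ |p^{(ℓ)}(∂) u|² e^{−|z|²} dλ, where p^{(ℓ)} denotes the ℓ-th derivative of the polynomial p. -/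
open Polynomial MeasureTheory ComplexConjugate

/-- The constant-coefficient differential operator q(∂) applied to a polynomial. -/
noncomputable def applyA (q u : Polynomial ℂ) : Polynomial ℂ :=
  ∑ k ∈ Finset.range (q.natDegree + 1), q.coeff k • derivative^[k] u

namespace Stmt11Aux


open Finset

noncomputable def bterm (f g : Polynomial ℂ) (n : ℕ) : ℂ :=
  f.coeff n * conj (g.coeff n) * ((Real.pi : ℂ) * n.factorial)

noncomputable def B (f g : Polynomial ℂ) : ℂ :=
  ∑ n ∈ Finset.range (f.natDegree + 1), bterm f g n

lemma bterm_eq_zero {f g : Polynomial ℂ} {n : ℕ} (h : f.natDegree < n ∨ g.natDegree < n) :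
    bterm f g n = 0 := by
  rcases h with h | h <;> simp [bterm, coeff_eq_zero_of_natDegree_lt h]

lemma B_eq (f g : Polynomial ℂ) {N : ℕ} (h : f.natDegree < N ∨ g.natDegree < N) :
    B f g = ∑ n ∈ Finset.range N, bterm f g n := by
  have key : ∀ {M K : ℕ}, M ≤ K → (∀ n, M ≤ n → bterm f g n = 0) →
      ∑ n ∈ Finset.range K, bterm f g n = ∑ n ∈ Finset.range M, bterm f g n := by
    intro M K hMK hz
    exact (Finset.sum_subset (Finset.range_subset_range.2 hMK)
      (fun n _ hn => hz n (by simpa using hn))).symm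
  have h1 : ∑ n ∈ Finset.range (max (f.natDegree + 1) N), bterm f g n
      = ∑ n ∈ Finset.range (f.natDegree + 1), bterm f g n :=
    key (le_max_left _ _) (fun n hn => bterm_eq_zero (Or.inl (by omega)))
  have h2 : ∑ n ∈ Finset.range (max (f.natDegree + 1) N), bterm f g n
      = ∑ n ∈ Finset.range N, bterm f g n :=
    key (le_max_right _ _) (fun n hn => bterm_eq_zero (h.imp (fun hf => by omega) (fun hg => by omega)))
  rw [B, ← h1, h2]

lemma B_zero_left (g : Polynomial ℂ) : B 0 g = 0 := by simp [B, bterm]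

lemma B_add_left (f₁ f₂ g : Polynomial ℂ) : B (f₁ + f₂) g = B f₁ g + B f₂ g := by
  rw [B_eq (f₁ + f₂) g (Or.inr (lt_add_one _)), B_eq f₁ g (Or.inr (lt_add_one _)),
    B_eq f₂ g (Or.inr (lt_add_one _)), ← Finset.sum_add_distrib]
  exact Finset.sum_congr rfl fun n _ => by simp [bterm, coeff_add]; ring

lemma B_smul_left (c : ℂ) (f g : Polynomial ℂ) : B (c • f) g = c * B f g := by
  rw [B_eq (c • f) g (Or.inr (lt_add_one _)), B_eq f g (Or.inr (lt_add_one _)), Finset.mul_sum]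
  exact Finset.sum_congr rfl fun n _ => by simp [bterm, coeff_smul, smul_eq_mul]; ring

lemma B_sub_left (f₁ f₂ g : Polynomial ℂ) : B (f₁ - f₂) g = B f₁ g - B f₂ g := by
  have := B_add_left f₂ (f₁ - f₂) g
  rw [add_sub_cancel] at this
  rw [this]; ring

lemma B_sum_left {ι : Type*} (s : Finset ι) (F : ι → Polynomial ℂ) (g : Polynomial ℂ) :
    B (∑ i ∈ s, F i) g = ∑ i ∈ s, B (F i) g := by
  induction s using Finset.cons_induction with
  | empty => simp [B_zero_left]
  | cons a s ha ih => rw [Finset.sum_cons, Finset.sum_cons, B_add_left, ih]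

lemma B_smul_right (c : ℂ) (f g : Polynomial ℂ) : B f (c • g) = conj c * B f g := by
  rw [B, B, Finset.mul_sum]
  exact Finset.sum_congr rfl fun n _ => by simp [bterm, coeff_smul, smul_eq_mul]; ring

lemma B_add_right (f g₁ g₂ : Polynomial ℂ) : B f (g₁ + g₂) = B f g₁ + B f g₂ := by
  rw [B, B, B, ← Finset.sum_add_distrib]
  exact Finset.sum_congr rfl fun n _ => by simp [bterm, coeff_add]; ring

lemma B_sum_right {ι : Type*} (s : Finset ι) (f : Polynomial ℂ) (G : ι → Polynomial ℂ) :
    B f (∑ i ∈ s, G i) = ∑ i ∈ s, B f (G i) := by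
  induction s using Finset.cons_induction with
  | empty => simp [B, bterm]
  | cons a s ha ih => rw [Finset.sum_cons, Finset.sum_cons, B_add_right, ih]

lemma B_X_mul (f g : Polynomial ℂ) : B (X * f) g = B f (derivative g) := by
  rw [B_eq (X * f) g (N := g.natDegree + 2) (Or.inr (by omega)),
    B_eq f (derivative g) (N := g.natDegree + 1)
      (Or.inr (by have := natDegree_derivative_le g; omega)),
    Finset.sum_range_succ']
  have h0 : bterm (X * f) g 0 = 0 := by
    simp [bterm, Polynomial.mul_coeff_zero]
  rw [h0, add_zero]
  refine Finset.sum_congr rfl fun i _ => ?_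
  simp only [bterm, coeff_X_mul, coeff_derivative, map_mul, Nat.factorial_succ]
  have : conj ((i : ℂ) + 1) = (i : ℂ) + 1 := by
    simp
  push_cast
  rw [this]
  ring

lemma B_pow_mul (k : ℕ) (f g : Polynomial ℂ) : B (X ^ k * f) g = B f (derivative^[k] g) := by
  induction k generalizing f g with
  | zero => simp
  | succ k ih =>
    have h : (X ^ (k + 1) * f : Polynomial ℂ) = X ^ k * (X * f) := by ring
    rw [h, ih, B_X_mul, Function.iterate_succ_apply']

lemma conj_conj_poly (q : Polynomial ℂ) :
    (q.map (starRingEnd ℂ)).map (starRingEnd ℂ) = q := by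
  ext n; simp

lemma B_mul_left (v f g : Polynomial ℂ) :
    B (v * f) g = B f (applyA (v.map (starRingEnd ℂ)) g) := by
  have hdeg : (v.map (starRingEnd ℂ)).natDegree = v.natDegree :=
    natDegree_map (starRingEnd ℂ)
  conv_lhs => rw [v.as_sum_range_C_mul_X_pow]
  rw [Finset.sum_mul, B_sum_left, applyA, hdeg, B_sum_right]
  refine Finset.sum_congr rfl fun k _ => ?_
  rw [mul_assoc, ← smul_eq_C_mul, B_smul_left, B_pow_mul, coeff_map, B_smul_right]
  simp


open Finset

lemma applyA_eq_sum (q u : Polynomial ℂ) {N : ℕ} (h : q.natDegree < N) :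
    applyA q u = ∑ k ∈ Finset.range N, q.coeff k • derivative^[k] u :=
  Finset.sum_subset (Finset.range_subset_range.2 h) (fun k _ hk => by
    rw [coeff_eq_zero_of_natDegree_lt (by simp at hk; omega), zero_smul])

lemma keyM (p v u : Polynomial ℂ) :
    applyA p (v * u) = ∑ ℓ ∈ Finset.range (p.natDegree + 1),
      ((ℓ.factorial : ℂ)⁻¹) • ((derivative^[ℓ] v) * applyA (derivative^[ℓ] p) u) := by
  set m := p.natDegree with hm
  calc applyA p (v * u)
      = ∑ k ∈ Finset.range (m + 1), ∑ ℓ ∈ Finset.range (k + 1),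
          (p.coeff k * (k.choose ℓ : ℂ)) • (derivative^[ℓ] v * derivative^[k - ℓ] u) := by
        rw [applyA]
        refine Finset.sum_congr rfl fun k _ => ?_
        rw [mul_comm v u, iterate_derivative_mul, Finset.smul_sum]
        refine Finset.sum_congr rfl fun ℓ _ => ?_
        rw [mul_comm (derivative^[k - ℓ] u), ← Nat.cast_smul_eq_nsmul ℂ, smul_smul]
    _ = ∑ ℓ ∈ Finset.range (m + 1), ∑ k ∈ Finset.Ico ℓ (m + 1),
          (p.coeff k * (k.choose ℓ : ℂ)) • (derivative^[ℓ] v * derivative^[k - ℓ] u) := by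
        refine Finset.sum_comm' ?_
        intro k ℓ
        simp only [Finset.mem_range, Finset.mem_Ico]
        omega
    _ = ∑ ℓ ∈ Finset.range (m + 1), ∑ i ∈ Finset.range (m + 1 - ℓ),
          (p.coeff (ℓ + i) * ((ℓ + i).choose ℓ : ℂ)) • (derivative^[ℓ] v * derivative^[i] u) := by
        refine Finset.sum_congr rfl fun ℓ hℓ => ?_
        rw [Finset.sum_Ico_eq_sum_range]
        refine Finset.sum_congr rfl fun i _ => ?_
        rw [Nat.add_sub_cancel_left]
    _ = ∑ ℓ ∈ Finset.range (m + 1),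
          ((ℓ.factorial : ℂ)⁻¹) • ((derivative^[ℓ] v) * applyA (derivative^[ℓ] p) u) := by
        refine Finset.sum_congr rfl fun ℓ hℓ => ?_
        have hℓm : ℓ ≤ m := by simp at hℓ; omega
        have hd : (derivative^[ℓ] p).natDegree < m + 1 :=
          lt_of_le_of_lt (le_trans (natDegree_iterate_derivative p ℓ) (Nat.sub_le _ _))
            (by omega)
        rw [applyA_eq_sum _ _ hd, Finset.mul_sum, Finset.smul_sum]
        rw [Finset.sum_subset (Finset.range_subset_range.2 (by omega : m + 1 - ℓ ≤ m + 1))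
          (fun i _ hi => ?_)]
        · refine Finset.sum_congr rfl fun i _ => ?_
          rw [mul_smul_comm, smul_smul, coeff_iterate_derivative,
            Nat.descFactorial_eq_factorial_mul_choose]
          congr 1
          have hfac : (ℓ.factorial : ℂ) ≠ 0 := Nat.cast_ne_zero.2 (Nat.factorial_ne_zero ℓ)
          rw [nsmul_eq_mul]
          push_cast
          rw [show ℓ + i = i + ℓ from add_comm ℓ i]
          field_simp
        · have : p.coeff (ℓ + i) = 0 := coeff_eq_zero_of_natDegree_lt (by simp at hi; omega)
          rw [this, zero_mul, zero_smul]

lemma commutator_eq (p u : Polynomial ℂ) :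
    applyA p (p.map (starRingEnd ℂ) * u) - p.map (starRingEnd ℂ) * applyA p u
      = ∑ ℓ ∈ Finset.Icc 1 p.natDegree, ((ℓ.factorial : ℂ)⁻¹) •
          ((derivative^[ℓ] (p.map (starRingEnd ℂ))) * applyA (derivative^[ℓ] p) u) := by
  rw [keyM]
  have hins : Finset.range (p.natDegree + 1) = insert 0 (Finset.Icc 1 p.natDegree) := by
    ext x; simp only [Finset.mem_range, Finset.mem_insert, Finset.mem_Icc]; omega
  rw [hins, Finset.sum_insert (by simp)]
  simp only [Nat.factorial_zero, Nat.cast_one, inv_one, one_smul, Function.iterate_zero_apply]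
  ring


open Finset Real

lemma gauss_integrable :
    Integrable (fun z : ℂ => Real.exp (-(1/2) * ‖z‖ ^ 2)) := by
  have h := (GaussianFourier.integrable_cexp_neg_mul_sq_norm_add (V := ℂ)
    (b := (1/2 : ℂ)) (by norm_num) 0 0).norm
  refine h.congr (Filter.Eventually.of_forall fun z => ?_)
  simp [Complex.norm_exp, ← Complex.ofReal_pow]

lemma pow_mul_exp_bound (n : ℕ) (r : ℝ) (hr : 0 ≤ r) :
    r ^ n * Real.exp (-r ^ 2) ≤ (1 + 2 ^ n * n.factorial) * Real.exp (-(1/2) * r ^ 2) := by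
  have hx : (0:ℝ) ≤ r ^ 2 / 2 := by positivity
  have h1 : r ^ n ≤ 1 + r ^ (2 * n) := by
    rcases le_total r 1 with h | h
    · have h2 := pow_le_one₀ (n := n) hr h
      have := pow_nonneg hr (2 * n)
      linarith
    · have h2 : r ^ n ≤ r ^ (2 * n) := pow_le_pow_right₀ h (by omega)
      linarith
  have h2 : (r ^ 2 / 2) ^ n / n.factorial ≤ Real.exp (r ^ 2 / 2) := by
    calc (r ^ 2 / 2) ^ n / n.factorial
        ≤ ∑ i ∈ Finset.range (n + 1), (r ^ 2 / 2) ^ i / i.factorial :=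
          Finset.single_le_sum (f := fun i => (r ^ 2 / 2) ^ i / (i.factorial : ℝ))
            (fun i _ => by positivity) (Finset.self_mem_range_succ n)
      _ ≤ Real.exp (r ^ 2 / 2) := Real.sum_le_exp_of_nonneg hx _
  have h3 : r ^ (2 * n) = 2 ^ n * (r ^ 2 / 2) ^ n := by
    rw [div_pow, pow_mul]
    field_simp
  have hfac : (0:ℝ) < n.factorial := by positivity
  have h4 : r ^ (2 * n) ≤ 2 ^ n * n.factorial * Real.exp (r ^ 2 / 2) := by
    rw [h3]
    have := (div_le_iff₀ hfac).1 h2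
    have h2n : (0:ℝ) < 2 ^ n := by positivity
    nlinarith
  have hE1 : Real.exp (-(1/2) * r ^ 2) = Real.exp (-(r ^ 2 / 2)) := by ring_nf
  have hE2 : Real.exp (-r ^ 2) = Real.exp (-(r ^ 2 / 2)) * Real.exp (-(r ^ 2 / 2)) := by
    rw [← Real.exp_add]; ring_nf
  have hprod : Real.exp (r ^ 2 / 2) * Real.exp (-(r ^ 2 / 2)) = 1 := by
    rw [← Real.exp_add]; simp
  have hpos : 0 < Real.exp (-(r ^ 2 / 2)) := Real.exp_pos _
  have hle1 : Real.exp (-(r ^ 2 / 2)) ≤ 1 := by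
    rw [Real.exp_le_one_iff]
    linarith
  rw [hE1, hE2]
  have hrn : 0 ≤ r ^ n := pow_nonneg hr n
  have h5 : 2 ^ n * (n.factorial : ℝ) * Real.exp (r ^ 2 / 2) *
      (Real.exp (-(r ^ 2 / 2)) * Real.exp (-(r ^ 2 / 2)))
      = 2 ^ n * n.factorial * Real.exp (-(r ^ 2 / 2)) := by
    calc 2 ^ n * (n.factorial : ℝ) * Real.exp (r ^ 2 / 2) *
        (Real.exp (-(r ^ 2 / 2)) * Real.exp (-(r ^ 2 / 2)))
        = 2 ^ n * (n.factorial : ℝ) *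
          (Real.exp (r ^ 2 / 2) * Real.exp (-(r ^ 2 / 2))) * Real.exp (-(r ^ 2 / 2)) := by ring
      _ = 2 ^ n * n.factorial * Real.exp (-(r ^ 2 / 2)) := by rw [hprod]; ring
  nlinarith [mul_le_mul_of_nonneg_right h1 (le_of_lt (mul_pos hpos hpos)),
    mul_le_mul_of_nonneg_right h4 (le_of_lt (mul_pos hpos hpos)),
    mul_le_mul_of_nonneg_right hle1 hpos.le]

lemma mono_integrable (i j : ℕ) :
    Integrable (fun z : ℂ => z ^ i * conj z ^ j * (Real.exp (-‖z‖ ^ 2) : ℂ)) := by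
  refine Integrable.mono' (g := fun z : ℂ =>
      (1 + 2 ^ (i + j) * (i + j).factorial) * Real.exp (-(1/2) * ‖z‖ ^ 2))
    (gauss_integrable.const_mul _) ?_ ?_
  · refine Continuous.aestronglyMeasurable ?_
    refine ((continuous_pow i).mul ((Complex.continuous_conj.pow j))).mul ?_
    exact Complex.continuous_ofReal.comp ((Real.continuous_exp.comp (continuous_norm.pow 2).neg))
  · refine Filter.Eventually.of_forall fun z => ?_
    have hnorm : ‖z ^ i * conj z ^ j * (Real.exp (-‖z‖ ^ 2) : ℂ)‖
        = ‖z‖ ^ (i + j) * Real.exp (-‖z‖ ^ 2) := by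
      rw [norm_mul, norm_mul, norm_pow, norm_pow, RCLike.norm_conj, Complex.norm_real,
        Real.norm_eq_abs, abs_of_pos (Real.exp_pos _), pow_add]
    rw [hnorm]
    exact pow_mul_exp_bound (i + j) ‖z‖ (norm_nonneg z)



lemma radial_value (i : ℕ) :
    ∫ r in Set.Ioi (0:ℝ), r ^ (2 * i + 1) * Real.exp (-r ^ 2)
      = (1 / 2) * (i.factorial : ℝ) := by
  have hcong : ∀ r ∈ Set.Ioi (0:ℝ),
      r ^ (2 * i + 1) * Real.exp (-r ^ 2)
        = r ^ ((2 * i + 1 : ℕ) : ℝ) * Real.exp (-r ^ (2:ℝ)) := by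
    intro r hr
    rw [Real.rpow_natCast, show (2:ℝ) = ((2:ℕ):ℝ) by norm_num, Real.rpow_natCast]
  rw [setIntegral_congr_fun measurableSet_Ioi hcong,
    integral_rpow_mul_exp_neg_rpow two_pos (by push_cast; linarith [show (0:ℝ) ≤ (i:ℝ) from Nat.cast_nonneg i])]
  have : (((2 * i + 1 : ℕ) : ℝ) + 1) / 2 = (i : ℝ) + 1 := by push_cast; ring
  rw [this, Real.Gamma_nat_eq_factorial]

lemma angular_zero {i j : ℕ} (h : i ≠ j) :
    ∫ θ in Set.Ioo (-Real.pi) Real.pi,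
      Complex.exp ((((i:ℤ) - (j:ℤ) : ℤ) : ℂ) * θ * Complex.I) = 0 := by
  set n : ℤ := (i : ℤ) - j with hn
  have hn0 : (n : ℂ) ≠ 0 := by
    simp only [Ne, Int.cast_eq_zero]
    omega
  have hc : (n : ℂ) * Complex.I ≠ 0 := mul_ne_zero hn0 Complex.I_ne_zero
  rw [← integral_Ioc_eq_integral_Ioo,
    ← intervalIntegral.integral_of_le (by linarith [Real.pi_pos] : -Real.pi ≤ Real.pi)]
  have harg : ∀ θ : ℝ, (n : ℂ) * θ * Complex.I = ((n : ℂ) * Complex.I) * θ := fun θ => by ring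
  simp_rw [harg]
  rw [integral_exp_mul_complex hc]
  have hmp : ((n : ℂ) * Complex.I) * (Real.pi : ℂ) = (n : ℂ) * ((Real.pi : ℂ) * Complex.I) := by
    ring
  have hmn : ((n : ℂ) * Complex.I) * ((-Real.pi : ℝ) : ℂ)
      = ((-n : ℤ) : ℂ) * ((Real.pi : ℂ) * Complex.I) := by push_cast; ring
  rw [hmp, hmn, Complex.exp_int_mul, Complex.exp_int_mul, Complex.exp_pi_mul_I]
  have : ((-1 : ℂ)) ^ n = ((-1 : ℂ)) ^ (-n) := by
    rcases Int.even_or_odd n with he | ho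
    · rw [he.neg_one_zpow, (he.neg).neg_one_zpow]
    · rw [ho.neg_one_zpow, (ho.neg).neg_one_zpow]
  rw [← this, sub_self, zero_div]

lemma mono_integral (i j : ℕ) :
    ∫ z : ℂ, z ^ i * conj z ^ j * (Real.exp (-‖z‖ ^ 2) : ℂ)
      = if i = j then (Real.pi : ℂ) * i.factorial else 0 := by
  rw [← Complex.integral_comp_polarCoord_symm, polarCoord_target]
  have hpt : Set.EqOn
      (fun q : ℝ × ℝ => q.1 • ((Complex.polarCoord.symm q) ^ i *
        conj (Complex.polarCoord.symm q) ^ j *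
        (Real.exp (-‖Complex.polarCoord.symm q‖ ^ 2) : ℂ)))
      (fun q : ℝ × ℝ =>
        (fun r : ℝ => ((r ^ (i + j + 1) * Real.exp (-r ^ 2) : ℝ) : ℂ)) q.1 *
        (fun θ : ℝ => Complex.exp ((((i:ℤ) - (j:ℤ) : ℤ) : ℂ) * θ * Complex.I)) q.2)
      (Set.Ioi (0:ℝ) ×ˢ Set.Ioo (-Real.pi) Real.pi) := by
    rintro ⟨r, θ⟩ ⟨hr, hθ⟩
    simp only
    have hz : Complex.polarCoord.symm (r, θ) = (r : ℂ) * Complex.exp ((θ : ℂ) * Complex.I) := by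
      rw [Complex.polarCoord_symm_apply, Complex.exp_mul_I, ← Complex.ofReal_cos,
        ← Complex.ofReal_sin]
    have hnorm : ‖Complex.polarCoord.symm (r, θ)‖ = r := by
      rw [hz, norm_mul, Complex.norm_real,
        Complex.norm_exp]
      simp [abs_of_pos (Set.mem_Ioi.mp hr)]
    have hconj : conj (Complex.polarCoord.symm (r, θ))
        = (r : ℂ) * Complex.exp (-((θ : ℂ) * Complex.I)) := by
      rw [hz, map_mul, Complex.conj_ofReal, ← Complex.exp_conj]
      congr 2
      simp [Complex.conj_ofReal]
    have key : Complex.exp ((i : ℂ) * ((θ : ℂ) * Complex.I)) *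
        Complex.exp ((j : ℂ) * (-((θ : ℂ) * Complex.I)))
        = Complex.exp ((((i:ℤ) - (j:ℤ) : ℤ) : ℂ) * θ * Complex.I) := by
      rw [← Complex.exp_add]
      congr 1
      push_cast
      ring
    rw [hnorm, hconj, hz]
    calc (r : ℝ) • (((r : ℂ) * Complex.exp ((θ : ℂ) * Complex.I)) ^ i *
          ((r : ℂ) * Complex.exp (-((θ : ℂ) * Complex.I))) ^ j *
          (Real.exp (-r ^ 2) : ℂ))
        = ((r ^ (i + j + 1) * Real.exp (-r ^ 2) : ℝ) : ℂ) *
          (Complex.exp ((i : ℂ) * ((θ : ℂ) * Complex.I)) *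
           Complex.exp ((j : ℂ) * (-((θ : ℂ) * Complex.I)))) := by
          rw [mul_pow, mul_pow, ← Complex.exp_nat_mul, ← Complex.exp_nat_mul,
            Complex.real_smul]
          push_cast
          ring
      _ = _ := by rw [key]
  rw [setIntegral_congr_fun (measurableSet_Ioi.prod measurableSet_Ioo) hpt,
    Measure.volume_eq_prod,
    setIntegral_prod_mul (fun r : ℝ => ((r ^ (i + j + 1) * Real.exp (-r ^ 2) : ℝ) : ℂ))
      (fun θ : ℝ => Complex.exp ((((i:ℤ) - (j:ℤ) : ℤ) : ℂ) * θ * Complex.I))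
      (Set.Ioi (0:ℝ)) (Set.Ioo (-Real.pi) Real.pi)]
  by_cases h : i = j
  · subst h
    have h1 : (∫ r in Set.Ioi (0:ℝ), ((r ^ (i + i + 1) * Real.exp (-r ^ 2) : ℝ) : ℂ))
        = ((1 / 2 * (i.factorial : ℝ) : ℝ) : ℂ) := by
      calc (∫ r in Set.Ioi (0:ℝ), ((r ^ (i + i + 1) * Real.exp (-r ^ 2) : ℝ) : ℂ))
          = ((∫ r in Set.Ioi (0:ℝ), r ^ (i + i + 1) * Real.exp (-r ^ 2) : ℝ) : ℂ) :=
            integral_ofReal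
        _ = _ := by rw [show i + i + 1 = 2 * i + 1 by ring, radial_value]
    have h2 : (∫ θ in Set.Ioo (-Real.pi) Real.pi,
        Complex.exp ((((i:ℤ) - (i:ℤ) : ℤ) : ℂ) * θ * Complex.I)) = ((2 * Real.pi : ℝ) : ℂ) := by
      have : ∀ θ : ℝ, Complex.exp ((((i:ℤ) - (i:ℤ) : ℤ) : ℂ) * θ * Complex.I) = 1 := by
        intro θ; simp
      simp_rw [this]
      rw [integral_const, measureReal_def, Measure.restrict_apply MeasurableSet.univ, Set.univ_inter,
        Real.volume_Ioo, ENNReal.toReal_ofReal (by linarith [Real.pi_pos] : (0:ℝ) ≤ Real.pi - -Real.pi),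
        Complex.real_smul, mul_one]
      norm_cast
      ring
    rw [h1, h2, if_pos rfl]
    push_cast
    ring
  · rw [angular_zero h, mul_zero, if_neg h]

lemma integral_eq_B (f g : Polynomial ℂ) :
    ∫ z : ℂ, f.eval z * conj (g.eval z) * (Real.exp (-‖z‖ ^ 2) : ℂ) = B f g := by
  have hrw : ∀ z : ℂ, f.eval z * conj (g.eval z) * (Real.exp (-‖z‖ ^ 2) : ℂ)
      = ∑ q ∈ Finset.range (f.natDegree + 1) ×ˢ Finset.range (g.natDegree + 1),
          (f.coeff q.1 * conj (g.coeff q.2)) *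
            (z ^ q.1 * conj z ^ q.2 * (Real.exp (-‖z‖ ^ 2) : ℂ)) := by
    intro z
    rw [eval_eq_sum_range (x := z), eval_eq_sum_range (p := g) (x := z), map_sum,
      Finset.sum_mul_sum, Finset.sum_product]
    rw [Finset.sum_mul]
    refine Finset.sum_congr rfl fun i _ => ?_
    rw [Finset.sum_mul]
    refine Finset.sum_congr rfl fun j _ => ?_
    simp only [map_mul, map_pow]
    ring
  simp_rw [hrw]
  rw [integral_finset_sum _ (fun q _ => (mono_integrable q.1 q.2).const_mul _)]
  have hval : ∀ q : ℕ × ℕ, (∫ z : ℂ, (f.coeff q.1 * conj (g.coeff q.2)) *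
      (z ^ q.1 * conj z ^ q.2 * (Real.exp (-‖z‖ ^ 2) : ℂ)))
      = (f.coeff q.1 * conj (g.coeff q.2)) *
          (if q.1 = q.2 then (Real.pi : ℂ) * q.1.factorial else 0) := by
    intro q
    rw [integral_const_mul, mono_integral]
  simp_rw [hval]
  rw [Finset.sum_product]
  simp only [mul_ite, mul_zero]
  rw [B]
  refine Finset.sum_congr rfl fun i hi => ?_
  rw [Finset.sum_ite_eq]
  by_cases hG : i ∈ Finset.range (g.natDegree + 1)
  · rw [if_pos hG]
    rfl
  · rw [if_neg hG]
    have : g.coeff i = 0 := coeff_eq_zero_of_natDegree_lt (by simp at hG; omega)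
    simp [bterm, this]


end Stmt11Aux

open Stmt11Aux

/-- Weyl-algebra form of the one-dimensional commutator:
∫ ([P,P^*]u) conj(u) e^{-|z|²} = Σ_{ℓ=1}^m (1/ℓ!) ∫ |p^{(ℓ)}(∂)u|² e^{-|z|²},
where P = p(∂) and P^* is multiplication by the conjugate-coefficient polynomial. -/
theorem stmt11 (p u : Polynomial ℂ) :
    (∫ z : ℂ,
        (applyA p (p.map (starRingEnd ℂ) * u) -
          p.map (starRingEnd ℂ) * applyA p u).eval z *
        (starRingEnd ℂ) (u.eval z) * (Real.exp (-‖z‖ ^ 2) : ℂ)) =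
      ∑ ℓ ∈ Finset.Icc 1 p.natDegree,
        (1 / (Nat.factorial ℓ : ℂ)) *
          ∫ z : ℂ, ((Complex.normSq ((applyA (derivative^[ℓ] p) u).eval z) : ℝ) : ℂ) *
            (Real.exp (-‖z‖ ^ 2) : ℂ) := by
  rw [integral_eq_B (applyA p (p.map (starRingEnd ℂ) * u) -
      p.map (starRingEnd ℂ) * applyA p u) u]
  rw [commutator_eq, B_sum_left]
  refine Finset.sum_congr rfl fun ℓ hℓ => ?_
  rw [B_smul_left, B_mul_left, iterate_derivative_map, Polynomial.map_map]
  have hcc : (starRingEnd ℂ).comp (starRingEnd ℂ) = RingHom.id ℂ := by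
    ext z; simp
  rw [hcc, Polynomial.map_id, one_div]
  congr 1
  rw [← integral_eq_B]
  congr 1
  funext z
  rw [Complex.mul_conj]
end

section
/- (Two-dimensional positivity identity, Example (c)) In ℂ², let p_k = ∂²/∂z_k² for k = 1,2, and let p_k^* denote multiplication by z_k². Then for any polynomials u_1, u_2 in (z_1, z_2), Σ_{j,k=1}^{2} ∫_{ℂ²} ([p_k, p_j^*] u_j) \overline{u_k} e^{−|z|²} dλ = 2(‖u_1‖² + ‖u_2‖²) + 4(‖∂u_1/∂z_1‖² + ‖∂u_2/∂z_2‖²), where ‖f‖² = ∫_{ℂ²} |f|² e^{−|z|²} dλ. In particular the left-hand side is at least 2(‖u_1‖²+‖u_2‖²). -/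
open MeasureTheory MvPolynomial

/-- Gaussian weight e^{-|z|²} on ℂ², as a complex number. -/
noncomputable def E2 (z : Fin 2 → ℂ) : ℂ := (Real.exp (-∑ i, ‖z i‖ ^ 2) : ℂ)

/-- Weighted L² square norm ∫ |v|² e^{-|z|²} dλ (as a complex number). -/
noncomputable def N2 (v : MvPolynomial (Fin 2) ℂ) : ℂ :=
  ∫ z : Fin 2 → ℂ, ((Complex.normSq (eval z v) : ℝ) : ℂ) * E2 z

section Helpers

open Real Set Complex

/-! ### One-variable Gaussian moment integrals over ℂ -/

lemma integrable_pow_exp (m : ℕ) : Integrable (fun x : ℝ => x ^ m * rexp (-x ^ 2)) := by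
  have h := integrable_rpow_mul_exp_neg_mul_sq (b := 1) one_pos
    (s := (m : ℝ)) (by exact_mod_cast neg_one_lt_zero.trans_le (Nat.cast_nonneg m))
  simpa [Real.rpow_natCast] using h

lemma integrable_aux (n : ℕ) : Integrable (fun x : ℝ => (1 + x ^ 2) ^ n * rexp (-x ^ 2)) := by
  have heq : (fun x : ℝ => (1 + x ^ 2) ^ n * rexp (-x ^ 2)) =
      fun x : ℝ => ∑ k ∈ Finset.range (n + 1),
        (n.choose k : ℝ) * (x ^ (2 * (n - k)) * rexp (-x ^ 2)) := by
    funext x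
    rw [add_pow, Finset.sum_mul]
    refine Finset.sum_congr rfl fun k _ => ?_
    rw [pow_mul]
    ring
  rw [heq]
  exact integrable_finset_sum _ fun k _ => ((integrable_pow_exp _).const_mul _)

lemma contSymm : Continuous (⇑Complex.measurableEquivRealProd.symm) := by
  have : ⇑Complex.measurableEquivRealProd.symm = fun p : ℝ × ℝ => (p.1 + p.2 * I : ℂ) := by
    funext p
    simp [Complex.measurableEquivRealProd_symm_apply, Complex.mk_eq_add_mul_I]
  rw [this]; fun_prop

/-- The one-variable integrand `z^a conj(z)^b e^{-|z|²}`. -/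
noncomputable def gI (a b : ℕ) : ℂ → ℂ :=
  fun z => z ^ a * (starRingEnd ℂ) z ^ b * (rexp (-‖z‖ ^ 2) : ℂ)

lemma norm_gI (a b : ℕ) (z : ℂ) :
    ‖z ^ a * (starRingEnd ℂ) z ^ b * (rexp (-‖z‖ ^ 2) : ℂ)‖ = ‖z‖ ^ (a + b) * rexp (-‖z‖ ^ 2) := by
  rw [norm_mul, norm_mul, norm_pow, norm_pow, RCLike.norm_conj, Complex.norm_real,
    Real.norm_eq_abs, abs_of_pos (Real.exp_pos _), pow_add]

lemma integrable_gI (a b : ℕ) : Integrable (gI a b) := by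
  unfold gI
  rw [← MeasurePreserving.integrable_comp_emb Complex.volume_preserving_equiv_real_prod.symm
    Complex.measurableEquivRealProd.symm.measurableEmbedding]
  have hcont : Continuous fun z : ℂ => z ^ a * (starRingEnd ℂ) z ^ b * (rexp (-‖z‖ ^ 2) : ℂ) := by
    apply Continuous.mul
    apply Continuous.mul
    · exact continuous_pow a
    · exact (continuous_star : Continuous fun z : ℂ => (starRingEnd ℂ) z).pow b
    · exact Complex.continuous_ofReal.comp (Real.continuous_exp.comp (by fun_prop))
  refine Integrable.mono' (g := fun p : ℝ × ℝ =>
      ((1 + p.1 ^ 2) ^ (a + b) * rexp (-p.1 ^ 2)) * ((1 + p.2 ^ 2) ^ (a + b) * rexp (-p.2 ^ 2)))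
    ((integrable_aux (a + b)).mul_prod (integrable_aux (a + b)))
    (hcont.comp contSymm).aestronglyMeasurable ?_
  refine Filter.Eventually.of_forall fun p => ?_
  set z : ℂ := Complex.measurableEquivRealProd.symm p with hz
  have hnormsq : ‖z‖ ^ 2 = p.1 ^ 2 + p.2 ^ 2 := by
    simp only [hz, Complex.sq_norm, Complex.measurableEquivRealProd_symm_apply,
      Complex.normSq_mk]
    ring
  have h1 : ‖z‖ ^ (a + b) ≤ ((1 + p.1 ^ 2) * (1 + p.2 ^ 2)) ^ (a + b) := by
    apply pow_le_pow_left₀ (norm_nonneg z)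
    nlinarith [norm_nonneg z, sq_nonneg (‖z‖ - 1), sq_nonneg (p.1 * p.2), sq_nonneg p.1,
      sq_nonneg p.2, hnormsq]
  calc ‖z ^ a * (starRingEnd ℂ) z ^ b * (rexp (-‖z‖ ^ 2) : ℂ)‖
      = ‖z‖ ^ (a + b) * rexp (-‖z‖ ^ 2) := norm_gI a b z
    _ ≤ ((1 + p.1 ^ 2) * (1 + p.2 ^ 2)) ^ (a + b) * rexp (-‖z‖ ^ 2) :=
        mul_le_mul_of_nonneg_right h1 (Real.exp_pos _).le
    _ = ((1 + p.1 ^ 2) ^ (a + b) * rexp (-p.1 ^ 2)) *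
        ((1 + p.2 ^ 2) ^ (a + b) * rexp (-p.2 ^ 2)) := by
        rw [hnormsq, neg_add, Real.exp_add, mul_pow]; ring

/-- The one-variable Gaussian moment integral. -/
noncomputable def J (a b : ℕ) : ℂ := ∫ z : ℂ, gI a b z

lemma radial (n : ℕ) :
    ∫ r in Ioi (0:ℝ), r ^ n * rexp (-r ^ 2) = (1/2) * Real.Gamma ((n+1)/2) := by
  have h : ∀ r ∈ Ioi (0:ℝ), r ^ n * rexp (-r ^ 2) = r ^ (n:ℝ) * rexp (-r ^ (2:ℝ)) := by
    intro r hr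
    rw [Real.rpow_natCast, show (2:ℝ) = ((2:ℕ):ℝ) by norm_num, Real.rpow_natCast]
  rw [setIntegral_congr_fun measurableSet_Ioi h,
    _root_.integral_rpow_mul_exp_neg_rpow (by norm_num : (0:ℝ) < 2)
      (neg_one_lt_zero.trans_le (Nat.cast_nonneg n))]

lemma angular_zero {c : ℂ} (hc : c ≠ 0) (hint : ∃ n : ℤ, c = n) :
    ∫ θ in Ioo (-π) π, Complex.exp (c * θ * I) = 0 := by
  obtain ⟨n, rfl⟩ := hint
  rw [← integral_Ioc_eq_integral_Ioo, ← intervalIntegral.integral_of_le (by linarith [Real.pi_pos])]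
  have : ∀ θ : ℝ, Complex.exp ((n:ℂ) * θ * I) = Complex.exp (((n:ℂ) * I) * θ) := by
    intro θ; ring_nf
  simp_rw [this]
  rw [integral_exp_mul_complex (mul_ne_zero hc Complex.I_ne_zero)]
  have hpow : Complex.exp ((n:ℂ) * I * π) = (-1 : ℂ) ^ n := by
    rw [show (n:ℂ) * I * π = (n:ℂ) * (π * I) by ring, Complex.exp_int_mul, Complex.exp_pi_mul_I]
  have hpow' : Complex.exp ((n:ℂ) * I * (-π:ℝ)) = ((-1 : ℂ) ^ n)⁻¹ := by
    push_cast
    rw [show (n:ℂ) * I * (-π) = (-n:ℤ) * (π * I) by push_cast; ring, Complex.exp_int_mul,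
      Complex.exp_pi_mul_I, zpow_neg]
  have hinv : ((-1 : ℂ) ^ n)⁻¹ = (-1 : ℂ) ^ n := by
    rw [← zpow_neg]
    rcases Int.even_or_odd n with he | ho
    · rw [he.neg.neg_one_zpow, he.neg_one_zpow]
    · rw [Odd.neg_one_zpow (by simpa using ho.neg), ho.neg_one_zpow]
  rw [hpow, hpow', hinv, sub_self, zero_div]

lemma key_polar (a b : ℕ) (r θ : ℝ) (hr : r ∈ Ioi (0:ℝ)) :
      r • ((Complex.polarCoord.symm (r,θ)) ^ a *
          (starRingEnd ℂ) (Complex.polarCoord.symm (r,θ)) ^ b *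
        (rexp (-‖Complex.polarCoord.symm (r,θ)‖ ^ 2) : ℂ)) =
      ((r ^ (a + b + 1) * rexp (-r ^ 2) : ℝ) : ℂ) * Complex.exp (((a:ℂ) - b) * θ * I) := by
  have hnorm : ‖Complex.polarCoord.symm (r,θ)‖ = r := by
    rw [Complex.norm_polarCoord_symm]
    exact abs_of_pos hr
  rw [hnorm]
  simp only [Complex.polarCoord_symm_apply, Complex.ofReal_cos, Complex.ofReal_sin,
    ← Complex.exp_mul_I]
  rw [map_mul, Complex.conj_ofReal, ← Complex.exp_conj]
  simp only [map_mul, Complex.conj_ofReal, Complex.conj_I, mul_pow, ← Complex.exp_nat_mul]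
  rw [Complex.real_smul]
  have hcomb : Complex.exp ((a:ℂ) * (↑θ * I)) * Complex.exp ((b:ℂ) * (↑θ * -I)) =
      Complex.exp (((a:ℂ) - b) * θ * I) := by
    rw [← Complex.exp_add]; ring_nf
  push_cast
  calc (r:ℂ) * ((r:ℂ) ^ a * cexp ((a:ℂ) * (↑θ * I)) * ((r:ℂ) ^ b * cexp ((b:ℂ) * (↑θ * -I))) *
        Complex.exp (-(r:ℂ) ^ 2 : ℂ))
      = ((r:ℂ) ^ (a + b + 1) * Complex.exp (-(r:ℂ)^2)) *
          (cexp ((a:ℂ) * (↑θ * I)) * cexp ((b:ℂ) * (↑θ * -I))) := by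
        rw [pow_add, pow_add]; ring
    _ = _ := by rw [hcomb]

lemma J_eq (a b : ℕ) : J a b = if a = b then (π : ℂ) * (Nat.factorial a) else 0 := by
  rw [J]
  unfold gI
  rw [← Complex.integral_comp_polarCoord_symm, polarCoord_target]
  rw [setIntegral_congr_fun (measurableSet_Ioi.prod measurableSet_Ioo)
    (fun p hp => key_polar a b p.1 p.2 hp.1)]
  rw [Measure.volume_eq_prod]
  rw [setIntegral_prod_mul (fun r : ℝ => ((r ^ (a + b + 1) * rexp (-r ^ 2) : ℝ) : ℂ))
    (fun θ : ℝ => Complex.exp (((a:ℂ) - b) * θ * I)) (Ioi 0) (Ioo (-π) π)]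
  have hre : (∫ x in Ioi (0:ℝ), ((x ^ (a + b + 1) * rexp (-x ^ 2) : ℝ) : ℂ)) =
      ((∫ x in Ioi (0:ℝ), x ^ (a + b + 1) * rexp (-x ^ 2) : ℝ) : ℂ) := integral_ofReal
  rw [hre, radial (a + b + 1)]
  by_cases hab : a = b
  · subst hab
    simp only [sub_self, zero_mul, Complex.exp_zero]
    rw [setIntegral_const]
    rw [Real.volume_real_Ioo_of_le (by linarith [Real.pi_pos])]
    simp only [if_true]
    have hg : Real.Gamma ((↑(a + a + 1) + 1)/2) = Nat.factorial a := by
      rw [show ((↑(a + a + 1) : ℝ) + 1)/2 = (a : ℝ) + 1 by push_cast; ring]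
      exact_mod_cast Real.Gamma_nat_eq_factorial a
    rw [hg]
    rw [Complex.real_smul]
    push_cast
    ring
  · rw [angular_zero (sub_ne_zero.mpr (by exact_mod_cast hab)) ⟨(a:ℤ) - b, by push_cast; ring⟩,
      mul_zero, if_neg hab]

lemma J_succ (a b : ℕ) : J (a + 1) b = (b : ℂ) * J a (b - 1) := by
  rcases b with _ | k
  · simp [J_eq]
  · rw [J_eq, J_eq, Nat.succ_sub_one]
    rcases eq_or_ne a k with rfl | h
    · rw [if_pos rfl, if_pos rfl, Nat.factorial_succ]
      push_cast; ring
    · rw [if_neg (by omega), if_neg h, mul_zero]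

lemma J_shift (i : Fin 2) (s t : Fin 2 →₀ ℕ) :
    J ((Finsupp.single i 1 + s : Fin 2 →₀ ℕ) 0) (t 0) *
      J ((Finsupp.single i 1 + s : Fin 2 →₀ ℕ) 1) (t 1) =
    (t i : ℂ) * (J (s 0) ((t - Finsupp.single i 1 : Fin 2 →₀ ℕ) 0) *
      J (s 1) ((t - Finsupp.single i 1 : Fin 2 →₀ ℕ) 1)) := by
  fin_cases i <;>
    [skip; skip] <;>
    simp [Finsupp.single_apply, Fin.ext_iff, add_comm 1] <;>
    rw [J_succ] <;> ring

/-! ### Two-variable integrals -/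

lemma mI_eq_prod (s t : Fin 2 →₀ ℕ) (z : Fin 2 → ℂ) :
    (∏ i, z i ^ s i) * (starRingEnd ℂ) (∏ i, z i ^ t i) * E2 z =
      ∏ i, gI (s i) (t i) (z i) := by
  simp only [E2, gI, Fin.prod_univ_two, Fin.sum_univ_two, map_mul, map_pow, neg_add,
    Real.exp_add, Complex.ofReal_mul]
  ring

lemma integrable_prod_gI (s t : Fin 2 →₀ ℕ) :
    Integrable (fun z : Fin 2 → ℂ => ∏ i, gI (s i) (t i) (z i)) :=
  Integrable.fintype_prod (fun i => integrable_gI (s i) (t i))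

lemma integral_prod_gI (s t : Fin 2 →₀ ℕ) :
    (∫ z : Fin 2 → ℂ, ∏ i, gI (s i) (t i) (z i)) = J (s 0) (t 0) * J (s 1) (t 1) := by
  rw [integral_fintype_prod_volume_eq_prod (f := fun i (w : ℂ) => gI (s i) (t i) w), Fin.prod_univ_two]
  rfl

/-! ### The sesquilinear form B on polynomials -/

noncomputable def Bf (f g : MvPolynomial (Fin 2) ℂ) : (Fin 2 → ℂ) → ℂ :=
  fun z => eval z f * (starRingEnd ℂ) (eval z g) * E2 z

lemma Bf_monomial (s t : Fin 2 →₀ ℕ) (c c' : ℂ) (z : Fin 2 → ℂ) :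
    Bf (monomial s c) (monomial t c') z =
      (c * (starRingEnd ℂ) c') * ∏ i, gI (s i) (t i) (z i) := by
  rw [← mI_eq_prod s t z]
  simp only [Bf, eval_monomial, Finsupp.prod_pow, map_mul]
  ring

lemma Bf_add_left (p q g : MvPolynomial (Fin 2) ℂ) :
    Bf (p + q) g = fun z => Bf p g z + Bf q g z := by
  funext z; simp only [Bf, map_add, eval_add]; ring

lemma Bf_add_right (f p q : MvPolynomial (Fin 2) ℂ) :
    Bf f (p + q) = fun z => Bf f p z + Bf f q z := by
  funext z; simp only [Bf, map_add, eval_add]; ring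

lemma integrable_Bf (f g : MvPolynomial (Fin 2) ℂ) : Integrable (Bf f g) := by
  induction f using MvPolynomial.induction_on' generalizing g with
  | monomial s c =>
    induction g using MvPolynomial.induction_on' with
    | monomial t c' =>
      have heq : Bf (monomial s c) (monomial t c') =
          fun z => (c * (starRingEnd ℂ) c') * ∏ i, gI (s i) (t i) (z i) :=
        funext (Bf_monomial s t c c')
      rw [heq]
      exact (integrable_prod_gI s t).const_mul _
    | add g1 g2 ih1 ih2 =>
      rw [Bf_add_right]
      exact ih1.add ih2
  | add p q ih1 ih2 =>
    rw [Bf_add_left]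
    exact (ih1 g).add (ih2 g)

noncomputable def B (f g : MvPolynomial (Fin 2) ℂ) : ℂ := ∫ z : Fin 2 → ℂ, Bf f g z

lemma B_monomial (s t : Fin 2 →₀ ℕ) (c c' : ℂ) :
    B (monomial s c) (monomial t c') =
      (c * (starRingEnd ℂ) c') * (J (s 0) (t 0) * J (s 1) (t 1)) := by
  rw [B]
  simp_rw [Bf_monomial, ← smul_eq_mul (a := c * (starRingEnd ℂ) c'), integral_smul]
  rw [integral_prod_gI, smul_eq_mul]

lemma B_add_left (p q g : MvPolynomial (Fin 2) ℂ) : B (p + q) g = B p g + B q g := by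
  rw [B, Bf_add_left]
  exact integral_add (integrable_Bf p g) (integrable_Bf q g)

lemma B_add_right (f p q : MvPolynomial (Fin 2) ℂ) : B f (p + q) = B f p + B f q := by
  rw [B, Bf_add_right]
  exact integral_add (integrable_Bf f p) (integrable_Bf f q)

lemma B_zero_left (g : MvPolynomial (Fin 2) ℂ) : B 0 g = 0 := by
  rw [B]
  have : Bf 0 g = fun _ => 0 := by funext z; simp [Bf]
  rw [this, integral_zero]

lemma B_const_mul (c : ℂ) (f g : MvPolynomial (Fin 2) ℂ) : B (C c * f) g = c * B f g := by
  rw [B, B]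
  have : Bf (C c * f) g = fun z => c • Bf f g z := by
    funext z; simp only [Bf, eval_mul, eval_C, smul_eq_mul]; ring
  rw [this, integral_smul, smul_eq_mul]

lemma B_adjoint (i : Fin 2) (f g : MvPolynomial (Fin 2) ℂ) :
    B (X i * f) g = B f (pderiv i g) := by
  induction f using MvPolynomial.induction_on' generalizing g with
  | monomial s c =>
    induction g using MvPolynomial.induction_on' with
    | monomial t c' =>
      have hX : (X i : MvPolynomial (Fin 2) ℂ) = monomial (Finsupp.single i 1) 1 := rfl
      rw [hX, monomial_mul, one_mul, pderiv_monomial, B_monomial, B_monomial]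
      rw [J_shift i s t, map_mul, map_natCast]
      ring
    | add g1 g2 ih1 ih2 =>
      rw [map_add, B_add_right, B_add_right, ih1, ih2]
  | add p q ih1 ih2 =>
    rw [mul_add, B_add_left, B_add_left, ih1 g, ih2 g]

lemma N2_eq (v : MvPolynomial (Fin 2) ℂ) : N2 v = B v v := by
  rw [N2, B]
  congr 1
  funext z
  rw [show Bf v v z = eval z v * (starRingEnd ℂ) (eval z v) * E2 z from rfl,
    Complex.mul_conj]

lemma N2_re_nonneg (v : MvPolynomial (Fin 2) ℂ) : 0 ≤ (N2 v).re := by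
  have h : N2 v =
      ((∫ z : Fin 2 → ℂ, Complex.normSq (eval z v) * rexp (-∑ i, ‖z i‖ ^ 2) : ℝ) : ℂ) := by
    rw [N2]
    simp_rw [E2, ← Complex.ofReal_mul]
    exact integral_ofReal
  rw [h, Complex.ofReal_re]
  exact integral_nonneg fun z => mul_nonneg (Complex.normSq_nonneg _) (Real.exp_pos _).le

lemma comm_poly (j k : Fin 2) (v : MvPolynomial (Fin 2) ℂ) :
    pderiv k (pderiv k (X j ^ 2 * v)) - X j ^ 2 * pderiv k (pderiv k v) =
      if j = k then C 2 * v + C 4 * (X j * pderiv j v) else 0 := by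
  rcases eq_or_ne j k with rfl | h
  · rw [if_pos rfl]
    have hC2 : (C 2 : MvPolynomial (Fin 2) ℂ) = 2 := map_ofNat _ 2
    have hC4 : (C 4 : MvPolynomial (Fin 2) ℂ) = 4 := map_ofNat _ 4
    rw [hC2, hC4]
    simp only [pow_two, map_add, pderiv_mul, pderiv_X_self, mul_one, one_mul]
    ring
  · rw [if_neg h]
    simp only [pow_two, pderiv_mul, pderiv_X_of_ne h, mul_zero, zero_mul, add_zero, zero_add,
      mul_one, one_mul, map_add, map_mul, map_zero]
    ring

end Helpers

/-- Two-dimensional positivity identity (Example (c)): for p_k = ∂²/∂z_k²,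
Σ_{j,k} ([p_k,p_j^*]u_j, u_k) = 2(‖u₁‖²+‖u₂‖²) + 4(‖∂u₁/∂z₁‖²+‖∂u₂/∂z₂‖²),
and in particular the left-hand side is at least 2(‖u₁‖²+‖u₂‖²). -/
theorem stmt12 (u : Fin 2 → MvPolynomial (Fin 2) ℂ) :
    (∑ j : Fin 2, ∑ k : Fin 2,
        ∫ z : Fin 2 → ℂ,
          eval z (pderiv k (pderiv k (X j ^ 2 * u j)) -
              X j ^ 2 * pderiv k (pderiv k (u j))) *
            (starRingEnd ℂ) (eval z (u k)) * E2 z) =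
      2 * (N2 (u 0) + N2 (u 1)) +
        4 * (N2 (pderiv 0 (u 0)) + N2 (pderiv 1 (u 1))) ∧
    (2 * (N2 (u 0) + N2 (u 1))).re ≤
      (∑ j : Fin 2, ∑ k : Fin 2,
        ∫ z : Fin 2 → ℂ,
          eval z (pderiv k (pderiv k (X j ^ 2 * u j)) -
              X j ^ 2 * pderiv k (pderiv k (u j))) *
            (starRingEnd ℂ) (eval z (u k)) * E2 z).re := by
  have hterm : ∀ j k : Fin 2,
      (∫ z : Fin 2 → ℂ,
        eval z (pderiv k (pderiv k (X j ^ 2 * u j)) - X j ^ 2 * pderiv k (pderiv k (u j))) *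
          (starRingEnd ℂ) (eval z (u k)) * E2 z) =
      B (pderiv k (pderiv k (X j ^ 2 * u j)) - X j ^ 2 * pderiv k (pderiv k (u j))) (u k) :=
    fun j k => rfl
  have hdiag : ∀ j : Fin 2,
      B (pderiv j (pderiv j (X j ^ 2 * u j)) - X j ^ 2 * pderiv j (pderiv j (u j))) (u j) =
        2 * N2 (u j) + 4 * N2 (pderiv j (u j)) := by
    intro j
    rw [comm_poly j j (u j), if_pos rfl, B_add_left, B_const_mul, B_const_mul, B_adjoint,
      N2_eq, N2_eq]
  have hoff : ∀ j k : Fin 2, j ≠ k →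
      B (pderiv k (pderiv k (X j ^ 2 * u j)) - X j ^ 2 * pderiv k (pderiv k (u j))) (u k) = 0 := by
    intro j k h
    rw [comm_poly j k (u j), if_neg h, B_zero_left]
  have hmain : (∑ j : Fin 2, ∑ k : Fin 2,
      ∫ z : Fin 2 → ℂ,
        eval z (pderiv k (pderiv k (X j ^ 2 * u j)) - X j ^ 2 * pderiv k (pderiv k (u j))) *
          (starRingEnd ℂ) (eval z (u k)) * E2 z) =
      2 * (N2 (u 0) + N2 (u 1)) + 4 * (N2 (pderiv 0 (u 0)) + N2 (pderiv 1 (u 1))) := by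
    simp only [hterm]
    rw [Fin.sum_univ_two, Fin.sum_univ_two, Fin.sum_univ_two]
    rw [hdiag 0, hdiag 1, hoff 0 1 (by decide), hoff 1 0 (by decide)]
    ring
  refine ⟨hmain, ?_⟩
  rw [hmain]
  have e0 := N2_re_nonneg (pderiv 0 (u 0))
  have e1 := N2_re_nonneg (pderiv 1 (u 1))
  simp only [Complex.add_re, Complex.mul_re, Complex.re_ofNat, Complex.im_ofNat, zero_mul,
    sub_zero]
  linarith
end
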